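/- Let f, g : ℝ^d → [0,∞) be radially symmetric and radially nonincreasing, with the convolution f * g well defined everywhere. Then f * g is radially symmetric and radially nonincreasing. -/

import Mathlib

open MeasureTheory RealInnerProductSpace

private lemma aux_norm_le_of_sq {E : Type*} [NormedAddCommGroup E] {a b : E}
    (h : ‖a‖ ^ 2 ≤ ‖b‖ ^ 2) : ‖a‖ ≤ ‖b‖ := by
  nlinarith [norm_nonneg a, norm_nonneg b]

set_option maxHeartbeats 2000000 in
/-- Convolution of two radially symmetric, radially nonincreasing nonnegative
functions is radially symmetric and radially nonincreasing. -/
theorem stmt_2 (d : ℕ) (f g : EuclideanSpace ℝ (Fin d) → ℝ)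
    (hf_nonneg : ∀ x, 0 ≤ f x) (hg_nonneg : ∀ x, 0 ≤ g x)
    (hf_rad : ∀ x y, ‖x‖ = ‖y‖ → f x = f y)
    (hg_rad : ∀ x y, ‖x‖ = ‖y‖ → g x = g y)
    (hf_mono : ∀ x y, ‖x‖ ≤ ‖y‖ → f y ≤ f x)
    (hg_mono : ∀ x y, ‖x‖ ≤ ‖y‖ → g y ≤ g x)
    (h_int : ∀ x, Integrable (fun y => f (x - y) * g y)) :
    (∀ x y, ‖x‖ = ‖y‖ →
        (∫ z, f (x - z) * g z) = ∫ z, f (y - z) * g z) ∧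
    (∀ x y, ‖x‖ ≤ ‖y‖ →
        (∫ z, f (y - z) * g z) ≤ ∫ z, f (x - z) * g z) := by
  classical
  have part1 : ∀ x y : EuclideanSpace ℝ (Fin d), ‖x‖ = ‖y‖ →
      (∫ z, f (x - z) * g z) = ∫ z, f (y - z) * g z := by
    intro x y hxy
    by_cases hxy0 : x = y
    · rw [hxy0]
    set T := Submodule.reflection (ℝ ∙ (x - y))ᗮ with hTdef
    have hTx : T x = y := Submodule.reflection_sub hxy
    have hTy : T y = x := by rw [← hTx]; exact Submodule.reflection_reflection _ x
    calc (∫ z, f (x - z) * g z)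
        = ∫ z, f (x - T z) * g (T z) := (integral_comp T fun z => f (x - z) * g z).symm
      _ = ∫ z, f (y - z) * g z := by
          congr 1; funext z
          have hx : x - T z = T (y - z) := by rw [map_sub, hTy]
          rw [hf_rad (x - T z) (y - z) (by rw [hx, T.norm_map]),
            hg_rad (T z) z (T.norm_map z)]
  refine ⟨part1, ?_⟩
  intro x y hxy
  by_cases hy : y = 0
  · have hx : x = 0 := norm_le_zero_iff.mp (by simpa [hy] using hxy)
    rw [hx, hy]
  have hu0 : ‖y‖ ≠ 0 := norm_ne_zero_iff.mpr hy
  set e : EuclideanSpace ℝ (Fin d) := ‖y‖⁻¹ • y with he_def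
  set t : ℝ := ‖x‖ with ht_def
  set u : ℝ := ‖y‖ with hu_def
  have he : ‖e‖ = 1 := norm_smul_inv_norm hy
  have hye : y = u • e := by rw [he_def, hu_def, smul_inv_smul₀ hu0]
  have hxe : ‖x‖ = ‖t • e‖ := by
    rw [norm_smul, he, mul_one, Real.norm_eq_abs, ht_def, abs_of_nonneg (norm_nonneg x)]
  have htu : t ≤ u := hxy
  have ht0 : 0 ≤ t := norm_nonneg x
  have hu00 : 0 ≤ u := norm_nonneg y
  rw [part1 x (t • e) hxe, hye]
  -- goal: ∫ z, f (u • e - z) * g z ≤ ∫ z, f (t • e - z) * g z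
  set T := (Submodule.reflection (ℝ ∙ e)).trans (LinearIsometryEquiv.neg ℝ) with hTdef
  set c : EuclideanSpace ℝ (Fin d) := (t + u) • e with hc
  have hTsmul : ∀ r : ℝ, T (r • e) = -(r • e) := fun r => by
    simp [hTdef, Submodule.reflection_mem_subspace_eq_self (Submodule.mem_span_singleton_self e)]
  have hTe : ∀ z : EuclideanSpace ℝ (Fin d), ⟪T z, e⟫ = -⟪z, e⟫ := fun z => by
    have h1 : T e = -e := by simpa using hTsmul 1
    have h2 := T.inner_map_map z e
    rw [h1, inner_neg_right] at h2
    linarith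
  have hnσ : ∀ z : EuclideanSpace ℝ (Fin d),
      ‖T z + c‖ ^ 2 = ‖z‖ ^ 2 + (t + u) * ((t + u) - 2 * ⟪z, e⟫) := fun z => by
    rw [norm_add_sq_real, T.norm_map, hc, real_inner_smul_right, hTe z, norm_smul,
      he, mul_one, Real.norm_eq_abs, sq_abs]
    ring
  have hn1 : ∀ (r : ℝ) (z : EuclideanSpace ℝ (Fin d)),
      ‖r • e - z‖ ^ 2 = r ^ 2 - 2 * r * ⟪z, e⟫ + ‖z‖ ^ 2 := fun r z => by
    rw [norm_sub_sq_real, norm_smul, he, mul_one, Real.norm_eq_abs, sq_abs,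
      real_inner_smul_left, real_inner_comm e z]
    ring
  have hswap1 : ∀ z : EuclideanSpace ℝ (Fin d),
      ‖u • e - (T z + c)‖ = ‖t • e - z‖ := fun z => by
    have hid : u • e - (T z + c) = T (t • e - z) := by
      rw [map_sub, hTsmul t, hc]; module
    rw [hid, T.norm_map]
  have hswap2 : ∀ z : EuclideanSpace ℝ (Fin d),
      ‖t • e - (T z + c)‖ = ‖u • e - z‖ := fun z => by
    have hid : t • e - (T z + c) = T (u • e - z) := by
      rw [map_sub, hTsmul u, hc]; module
    rw [hid, T.norm_map]
  have key : ∀ z : EuclideanSpace ℝ (Fin d),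
      (fun w => f (u • e - w) * g w) z + (fun w => f (u • e - (T w + c)) * g (T w + c)) z
      ≤ (fun w => f (t • e - w) * g w) z + (fun w => f (t • e - (T w + c)) * g (T w + c)) z := by
    intro z
    simp only
    rw [hf_rad (u • e - (T z + c)) (t • e - z) (hswap1 z),
      hf_rad (t • e - (T z + c)) (u • e - z) (hswap2 z)]
    rcases le_total (2 * ⟪z, e⟫) (t + u) with hcase | hcase
    · have h1 : ‖t • e - z‖ ≤ ‖u • e - z‖ :=
        aux_norm_le_of_sq (by rw [hn1 t z, hn1 u z]; nlinarith)
      have h2 : ‖z‖ ≤ ‖T z + c‖ :=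
        aux_norm_le_of_sq (by rw [hnσ z]; nlinarith)
      have hf1 : f (u • e - z) ≤ f (t • e - z) := hf_mono _ _ h1
      have hg1 : g (T z + c) ≤ g z := hg_mono _ _ h2
      nlinarith [mul_nonneg (sub_nonneg.2 hf1) (sub_nonneg.2 hg1)]
    · have h1 : ‖u • e - z‖ ≤ ‖t • e - z‖ :=
        aux_norm_le_of_sq (by rw [hn1 t z, hn1 u z]; nlinarith)
      have h2 : ‖T z + c‖ ≤ ‖z‖ :=
        aux_norm_le_of_sq (by rw [hnσ z]; nlinarith)
      have hf1 : f (t • e - z) ≤ f (u • e - z) := hf_mono _ _ h1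
      have hg1 : g z ≤ g (T z + c) := hg_mono _ _ h2
      nlinarith [mul_nonneg (sub_nonneg.2 hf1) (sub_nonneg.2 hg1)]
  have Ik : Integrable (fun z => f (t • e - z) * g z) := h_int _
  have Ih : Integrable (fun z => f (u • e - z) * g z) := h_int _
  have Ikσ : Integrable (fun z => f (t • e - (T z + c)) * g (T z + c)) := by
    simpa [Function.comp_def] using
      (integrable_comp T (fun w => f (t • e - (w + c)) * g (w + c))).2 (Ik.comp_add_right c)
  have Ihσ : Integrable (fun z => f (u • e - (T z + c)) * g (T z + c)) := by
    simpa [Function.comp_def] using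
      (integrable_comp T (fun w => f (u • e - (w + c)) * g (w + c))).2 (Ih.comp_add_right c)
  have eqk : (∫ z, f (t • e - (T z + c)) * g (T z + c)) = ∫ z, f (t • e - z) * g z := by
    rw [integral_comp T (fun w => f (t • e - (w + c)) * g (w + c)),
      integral_add_right_eq_self (fun z => f (t • e - z) * g z) c]
  have eqh : (∫ z, f (u • e - (T z + c)) * g (T z + c)) = ∫ z, f (u • e - z) * g z := by
    rw [integral_comp T (fun w => f (u • e - (w + c)) * g (w + c)),
      integral_add_right_eq_self (fun z => f (u • e - z) * g z) c]
  have hsum := integral_mono (Ih.add Ihσ) (Ik.add Ikσ) key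
  simp only [Pi.add_apply] at hsum
  rw [integral_add Ih Ihσ, integral_add Ik Ikσ, eqk, eqh] at hsum
  linarith
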